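/- arXiv:1712.08799 — 2 statements merged into one kernel-verified Lean document; each statement's English description precedes it below -/
import Mathlib

section
/- For every a > 0 and every integer n ≥ 1, 1/(2(n+a)) + α₃/(n+a)² ≤ γ(a) - x_n < 1/(2(n+a)) + 1/(12(n+a)²), where α₃ = (1+a)²(ln(1+a) - ψ(1+a)) - (1+a)/2, x_n = ψ(n+a) - ψ(a) - ln((n+a)/a), and γ(a) = ln(a) - ψ(a). These constants α₃ and 1/12 are best possible. -/
open Real Filter Topology Set

noncomputable def digamma (x : ℝ) : ℝ := deriv Real.Gamma x / Real.Gamma x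

noncomputable def trigamma (x : ℝ) : ℝ := deriv digamma x

lemma gamma_diff {x : ℝ} (hx : 0 < x) : DifferentiableAt ℝ Real.Gamma x :=
  Real.differentiableAt_Gamma fun m => by
    have : -(m:ℝ) ≤ 0 := neg_nonpos.2 (Nat.cast_nonneg m)
    linarith [hx]

lemma digamma_add_one {x : ℝ} (hx : 0 < x) : digamma (x + 1) = digamma x + 1 / x := by
  have hΓx := Real.Gamma_pos_of_pos hx
  have hΓx1 := Real.Gamma_pos_of_pos (by linarith : (0:ℝ) < x + 1)
  have hd : HasDerivAt Real.Gamma (deriv Real.Gamma x) x := (gamma_diff hx).hasDerivAt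
  have h2 : HasDerivAt (fun y => y * Real.Gamma y)
      (1 * Real.Gamma x + x * deriv Real.Gamma x) x := (hasDerivAt_id x).mul hd
  have h3 : HasDerivAt (fun y => Real.Gamma (y + 1)) (deriv Real.Gamma (x+1) * 1) x := by
    have h := (gamma_diff (by linarith : (0:ℝ) < x + 1)).hasDerivAt.comp x ((hasDerivAt_id x).add_const 1)
    exact h
  have heq : (fun y => Real.Gamma (y + 1)) =ᶠ[nhds x] (fun y => y * Real.Gamma y) := by
    filter_upwards [eventually_gt_nhds hx] with y hy
    exact Real.Gamma_add_one hy.ne'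
  have h4 : deriv Real.Gamma (x+1) * 1 = 1 * Real.Gamma x + x * deriv Real.Gamma x :=
    (h3.congr_of_eventuallyEq heq.symm).unique h2
  rw [mul_one] at h4
  unfold digamma
  rw [Real.Gamma_add_one hx.ne', h4]
  field_simp
  ring

lemma digamma_one : digamma 1 = -Real.eulerMascheroniConstant := by
  unfold digamma
  rw [Real.hasDerivAt_Gamma_one.deriv, Real.Gamma_one, div_one]

lemma digamma_monotone : MonotoneOn digamma (Ioi (0:ℝ)) := by
  have hdiff : ∀ y ∈ Ioi (0:ℝ), DifferentiableAt ℝ (Real.log ∘ Real.Gamma) y := fun y hy =>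
    ((gamma_diff hy).log (Real.Gamma_pos_of_pos hy).ne')
  have h := Real.convexOn_log_Gamma.monotoneOn_deriv hdiff
  refine h.congr fun y hy => ?_
  have : HasDerivAt (Real.log ∘ Real.Gamma) (deriv Real.Gamma y / Real.Gamma y) y :=
    ((gamma_diff hy).hasDerivAt).log (Real.Gamma_pos_of_pos hy).ne'
  rw [this.deriv]; rfl

lemma digamma_nat (n : ℕ) : digamma ((n : ℝ) + 1) = -Real.eulerMascheroniConstant + harmonic n := by
  induction n with
  | zero => simpa using digamma_one
  | succ k ih =>
    have h : ((k:ℝ) + 1) > 0 := by positivity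
    have := digamma_add_one h
    push_cast
    push_cast at ih
    rw [show ((k:ℝ) + 1 + 1) = ((k:ℝ) + 1) + 1 by ring, this, ih, harmonic_succ]
    push_cast
    try ring_nf

lemma log_ratio_tendsto (c c' : ℝ) :
    Tendsto (fun x : ℝ => Real.log (x + c) - Real.log (x + c')) atTop (𝓝 0) := by
  have h1 : Tendsto (fun x : ℝ => (x + c) / (x + c')) atTop (𝓝 1) := by
    have h2 : Tendsto (fun x : ℝ => 1 + (c - c') / (x + c')) atTop (𝓝 (1 + 0)) := by
      refine tendsto_const_nhds.add ?_
      exact Tendsto.div_atTop tendsto_const_nhds (tendsto_atTop_add_const_right _ c' tendsto_id)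
    rw [add_zero] at h2
    apply h2.congr'
    filter_upwards [eventually_gt_atTop (max (-c') 0)] with x hx
    have hx' : x + c' > 0 := by have := lt_of_le_of_lt (le_max_left _ _) hx; linarith
    field_simp
    ring
  have h3 : Tendsto (fun x : ℝ => Real.log ((x + c) / (x + c'))) atTop (𝓝 0) := by
    have := (Real.continuousAt_log one_ne_zero).tendsto.comp h1
    rwa [Real.log_one] at this
  apply h3.congr'
  filter_upwards [eventually_gt_atTop (max (-c') (-c))] with x hx
  have hx1 : x + c > 0 := by have := lt_of_le_of_lt (le_max_right (-c') (-c)) hx; linarith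
  have hx2 : x + c' > 0 := by have := lt_of_le_of_lt (le_max_left (-c') (-c)) hx; linarith
  rw [Real.log_div hx1.ne' hx2.ne']

lemma tendsto_digamma_sub_log {t : ℝ} (ht : 0 < t) :
    Tendsto (fun N : ℕ => digamma (t + N) - Real.log (t + N)) atTop (𝓝 0) := by
  obtain ⟨m, hm⟩ := exists_nat_ge t
  rw [← Filter.tendsto_add_atTop_iff_nat 1]
  set γ := Real.eulerMascheroniConstant
  have hlo : ∀ N : ℕ, (-γ + (harmonic N : ℝ)) - Real.log (t + (N + 1)) ≤
      digamma (t + (N + 1 : ℕ)) - Real.log (t + (N + 1 : ℕ)) := by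
    intro N
    push_cast
    have h1 : digamma ((N : ℝ) + 1) ≤ digamma (t + (N + 1)) := by
      apply digamma_monotone (by exact_mod_cast Nat.succ_pos N : ((0:ℝ) < (N:ℝ)+1)) ?_ (by linarith)
      have : (0:ℝ) < t + ((N:ℝ)+1) := by positivity
      simpa using this
    rw [digamma_nat N] at h1
    linarith
  have hhi : ∀ N : ℕ, digamma (t + (N + 1 : ℕ)) - Real.log (t + (N + 1 : ℕ)) ≤
      (-γ + (harmonic (N + m) : ℝ)) - Real.log (t + (N + 1)) := by
    intro N
    push_cast
    have h1 : digamma (t + ((N : ℝ) + 1)) ≤ digamma (((N + m : ℕ) : ℝ) + 1) := by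
      have hA : (0:ℝ) < t + ((N:ℝ)+1) := by positivity
      have hB : (0:ℝ) < ((N + m : ℕ) : ℝ) + 1 := by positivity
      apply digamma_monotone (by simpa using hA) (by simpa using hB)
      push_cast
      linarith
    rw [digamma_nat (N + m)] at h1
    push_cast at h1
    linarith
  have keylim : ∀ c : ℕ, Tendsto (fun N : ℕ =>
      (-γ + (harmonic (N + c) : ℝ)) - Real.log (t + (N + 1))) atTop (𝓝 0) := by
    intro c
    have h1 : Tendsto (fun N : ℕ => ((harmonic (N + c) : ℝ) - Real.log (N + c)) - γ)
        atTop (𝓝 0) := by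
      have := (Real.tendsto_harmonic_sub_log.comp (tendsto_add_atTop_nat c)).sub_const γ
      simpa [γ] using this
    have h2 : Tendsto (fun N : ℕ => Real.log ((N : ℝ) + c) - Real.log ((N : ℝ) + (t + 1)))
        atTop (𝓝 0) := (log_ratio_tendsto (c : ℝ) (t + 1)).comp tendsto_natCast_atTop_atTop
    have h3 := h1.add h2
    rw [add_zero] at h3
    apply h3.congr
    intro N
    push_cast
    ring_nf
  refine tendsto_of_tendsto_of_tendsto_of_le_of_le' (keylim 0) (keylim m) ?_ ?_
  · filter_upwards with N; have := hlo N; push_cast at this ⊢; simpa using this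
  · filter_upwards with N; have := hhi N; push_cast at this ⊢; simpa using this

noncomputable def gam (t : ℝ) : ℝ := Real.log t - digamma t

noncomputable def dd (s : ℝ) : ℝ :=
  1/(2*s) + 1/(2*(s+1)) - (Real.log (s+1) - Real.log s)

noncomputable def GG (u : ℝ) : ℝ := 2*u/(1-u^2) - (Real.log (1+u) - Real.log (1-u))

lemma GG_hasDeriv {u : ℝ} (hu : u ∈ Ioo (-1:ℝ) 1) :
    HasDerivAt GG ((2*(1-u^2) - 2*u*(-(2*u)))/(1-u^2)^2 - (1/(1+u) - (-1)/(1-u))) u := by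
  obtain ⟨h1, h2⟩ := hu
  have hu1 : (1:ℝ) + u > 0 := by linarith
  have hu2 : (1:ℝ) - u > 0 := by linarith
  have hsq : (1:ℝ) - u^2 > 0 := by nlinarith
  have hden : HasDerivAt (fun u : ℝ => 1 - u^2) (-(2*u)) u := by
    have := (hasDerivAt_pow 2 u).const_sub 1
    simpa using this
  have hnum : HasDerivAt (fun u : ℝ => 2*u) 2 u := by
    simpa using (hasDerivAt_id u).const_mul (2:ℝ)
  have hdiv : HasDerivAt (fun u : ℝ => 2*u/(1-u^2))
      ((2*(1-u^2) - 2*u*(-(2*u)))/(1-u^2)^2) u := hnum.div hden hsq.ne'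
  have hlog1 : HasDerivAt (fun u : ℝ => Real.log (1+u)) (1/(1+u)) u := by
    have h := (((hasDerivAt_id u).const_add 1)).log hu1.ne'
    simpa using h
  have hlog2 : HasDerivAt (fun u : ℝ => Real.log (1-u)) ((-1)/(1-u)) u := by
    have h := (((hasDerivAt_id u).const_sub 1)).log hu2.ne'
    simpa using h
  exact hdiv.sub (hlog1.sub hlog2)

lemma GG_lb {u : ℝ} (hu0 : 0 < u) (hu : u ≤ 1/2) :
    4/3*u^3 + 8/5*u^5 + 12/7*u^7 ≤ GG u := by
  set g : ℝ → ℝ := fun u => GG u - (4/3*u^3 + 8/5*u^5 + 12/7*u^7) with hg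
  have hpoly : ∀ v : ℝ, HasDerivAt (fun u : ℝ => 4/3*u^3 + 8/5*u^5 + 12/7*u^7)
      (4*v^2 + 8*v^4 + 12*v^6) v := by
    intro v
    have h3 := (hasDerivAt_pow 3 v).const_mul (4/3 : ℝ)
    have h5 := (hasDerivAt_pow 5 v).const_mul (8/5 : ℝ)
    have h7 := (hasDerivAt_pow 7 v).const_mul (12/7 : ℝ)
    have := (h3.add h5).add h7
    refine this.congr_deriv ?_
    norm_num
    ring
  have hgd : ∀ v ∈ Ioo (-1:ℝ) 1, HasDerivAt g
      ((2*(1-v^2) - 2*v*(-(2*v)))/(1-v^2)^2 - (1/(1+v) - (-1)/(1-v))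
        - (4*v^2 + 8*v^4 + 12*v^6)) v := fun v hv => (GG_hasDeriv hv).sub (hpoly v)
  have hmono : StrictMonoOn g (Icc (0:ℝ) (1/2)) := by
    apply strictMonoOn_of_deriv_pos (convex_Icc _ _)
    · intro v hv
      have hv' : v ∈ Ioo (-1:ℝ) 1 := ⟨by linarith [hv.1], by linarith [hv.2]⟩
      exact (hgd v hv').differentiableAt.continuousAt.continuousWithinAt
    · intro v hv
      rw [interior_Icc] at hv
      obtain ⟨hv1, hv2⟩ := hv
      have hv' : v ∈ Ioo (-1:ℝ) 1 := ⟨by linarith, by linarith⟩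
      rw [(hgd v hv').deriv]
      have h1 : (1:ℝ) + v > 0 := by linarith
      have h2 : (1:ℝ) - v > 0 := by linarith
      have hsq : (1:ℝ) - v^2 > 0 := by nlinarith
      have key : (2*(1-v^2) - 2*v*(-(2*v)))/(1-v^2)^2 - (1/(1+v) - (-1)/(1-v))
          - (4*v^2 + 8*v^4 + 12*v^6) = (4*v^8*(4 - 3*v^2))/(1-v^2)^2 := by
        field_simp
        ring
      rw [key]
      apply div_pos
      · nlinarith [pow_pos hv1 8]
      · positivity
  have h0 : g 0 < g u := by
    apply hmono (by constructor <;> norm_num) ⟨hu0.le, hu⟩ hu0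
  have hg0 : g 0 = 0 := by simp [hg, GG]
  rw [hg0] at h0
  simp only [hg] at h0
  linarith

lemma GG_ub {u : ℝ} (hu0 : 0 < u) (hu : u ≤ 1/3) :
    GG u ≤ 4/3*u^3 + 8/5*u^5 + 12/7*u^7 + 9/4*u^9 := by
  set g : ℝ → ℝ := fun u => (4/3*u^3 + 8/5*u^5 + 12/7*u^7 + 9/4*u^9) - GG u with hg
  have hpoly : ∀ v : ℝ, HasDerivAt (fun u : ℝ => 4/3*u^3 + 8/5*u^5 + 12/7*u^7 + 9/4*u^9)
      (4*v^2 + 8*v^4 + 12*v^6 + 81/4*v^8) v := by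
    intro v
    have h3 := (hasDerivAt_pow 3 v).const_mul (4/3 : ℝ)
    have h5 := (hasDerivAt_pow 5 v).const_mul (8/5 : ℝ)
    have h7 := (hasDerivAt_pow 7 v).const_mul (12/7 : ℝ)
    have h9 := (hasDerivAt_pow 9 v).const_mul (9/4 : ℝ)
    have := ((h3.add h5).add h7).add h9
    refine this.congr_deriv ?_
    norm_num
    ring
  have hgd : ∀ v ∈ Ioo (-1:ℝ) 1, HasDerivAt g
      ((4*v^2 + 8*v^4 + 12*v^6 + 81/4*v^8)
        - ((2*(1-v^2) - 2*v*(-(2*v)))/(1-v^2)^2 - (1/(1+v) - (-1)/(1-v)))) v :=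
    fun v hv => (hpoly v).sub (GG_hasDeriv hv)
  have hmono : StrictMonoOn g (Icc (0:ℝ) (1/3)) := by
    apply strictMonoOn_of_deriv_pos (convex_Icc _ _)
    · intro v hv
      have hv' : v ∈ Ioo (-1:ℝ) 1 := ⟨by linarith [hv.1], by linarith [hv.2]⟩
      exact (hgd v hv').differentiableAt.continuousAt.continuousWithinAt
    · intro v hv
      rw [interior_Icc] at hv
      obtain ⟨hv1, hv2⟩ := hv
      have hv' : v ∈ Ioo (-1:ℝ) 1 := ⟨by linarith, by linarith⟩
      rw [(hgd v hv').deriv]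
      have h1 : (1:ℝ) + v > 0 := by linarith
      have h2 : (1:ℝ) - v > 0 := by linarith
      have hsq : (1:ℝ) - v^2 > 0 := by nlinarith
      have key : (4*v^2 + 8*v^4 + 12*v^6 + 81/4*v^8)
          - ((2*(1-v^2) - 2*v*(-(2*v)))/(1-v^2)^2 - (1/(1+v) - (-1)/(1-v)))
          = (v^8*(17/4 - 57/2*v^2 + 81/4*v^4))/(1-v^2)^2 := by
        field_simp
        ring
      rw [key]
      apply div_pos
      · have h9 : (0:ℝ) < 1/9 - v^2 := by nlinarith
        nlinarith [pow_pos hv1 8, mul_pos (pow_pos hv1 8) h9, pow_nonneg hv1.le 12]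
      · positivity
  have h0 : g 0 < g u := hmono (by constructor <;> norm_num) ⟨hu0.le, hu⟩ hu0
  have hg0 : g 0 = 0 := by simp [hg, GG]
  rw [hg0] at h0
  simp only [hg] at h0
  linarith

lemma dd_eq_GG {s : ℝ} (hs : 0 < s) : dd s = GG (1/(2*s+1)) := by
  have h1 : (0:ℝ) < 2*s+1 := by linarith
  have h2 : (0:ℝ) < s + 1 := by linarith
  have hu2 : (1:ℝ) - (1/(2*s+1))^2 ≠ 0 := by
    have : (1:ℝ) - (1/(2*s+1))^2 = (4*s^2+4*s)/(2*s+1)^2 := by field_simp; ring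
    rw [this]
    positivity
  have hlog : Real.log (1+(1/(2*s+1))) - Real.log (1-(1/(2*s+1)))
      = Real.log (s+1) - Real.log s := by
    have e1 : (1:ℝ) + 1/(2*s+1) = (s+1) * (2*(2*s+1)⁻¹) := by field_simp; ring
    have e2 : (1:ℝ) - 1/(2*s+1) = s * (2*(2*s+1)⁻¹) := by field_simp; ring
    rw [e1, e2, Real.log_mul h2.ne' (by positivity), Real.log_mul hs.ne' (by positivity)]
    ring
  unfold dd GG
  rw [hlog]
  have e3 : 2*(1/(2*s+1))/(1-(1/(2*s+1))^2) = 1/(2*s) + 1/(2*(s+1)) := by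
    rw [div_eq_iff hu2]
    field_simp
    ring
  rw [e3]

lemma dd_lb {s : ℝ} (hs : 1 ≤ s) :
    4/3*(1/(2*s+1))^3 + 8/5*(1/(2*s+1))^5 + 12/7*(1/(2*s+1))^7 ≤ dd s := by
  have hs0 : (0:ℝ) < s := by linarith
  rw [dd_eq_GG hs0]
  exact GG_lb (by positivity) (by rw [div_le_div_iff₀ (by linarith) (by norm_num)]; linarith)

lemma dd_ub {s : ℝ} (hs : 1 ≤ s) :
    dd s ≤ 4/3*(1/(2*s+1))^3 + 8/5*(1/(2*s+1))^5 + 12/7*(1/(2*s+1))^7 + 9/4*(1/(2*s+1))^9 := by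
  have hs0 : (0:ℝ) < s := by linarith
  rw [dd_eq_GG hs0]
  exact GG_ub (by positivity) (by rw [div_le_div_iff₀ (by linarith) (by norm_num)]; linarith)

noncomputable def EE (s : ℝ) : ℝ := 1/(12*s^2)

noncomputable def DD (s : ℝ) : ℝ :=
  1/(12*(s*(s+1))) + 1/(12*(s*(s+1)*(s+2))) + 19/(120*(s*(s+1)*(s+2)*(s+3)))
  + 9/(20*(s*(s+1)*(s+2)*(s+3)*(s+4))) + 863/(504*(s*(s+1)*(s+2)*(s+3)*(s+4)*(s+5)))
  + 1375/(168*(s*(s+1)*(s+2)*(s+3)*(s+4)*(s+5)*(s+6)))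

lemma ineq_I {s : ℝ} (hs : 1 ≤ s) :
    4/3*(1/(2*s+1))^3 + 8/5*(1/(2*s+1))^5 + 12/7*(1/(2*s+1))^7 + 9/4*(1/(2*s+1))^9
      < EE s - EE (s+1) := by
  have h0 : (0:ℝ) < s := by linarith
  have h1 : (0:ℝ) < 2*s+1 := by linarith
  have h2 : (0:ℝ) < s+1 := by linarith
  have hy : (0:ℝ) ≤ s - 1 := by linarith
  rw [← sub_pos]
  have key : EE s - EE (s+1)
      - (4/3*(1/(2*s+1))^3 + 8/5*(1/(2*s+1))^5 + 12/7*(1/(2*s+1))^7 + 9/4*(1/(2*s+1))^9)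
      = (2235924 + 11879136*(s-1) + 27641844*(s-1)^2 + 36772920*(s-1)^3 + 30583476*(s-1)^4 + 16284672*(s-1)^5 + 5422080*(s-1)^6 + 1032192*(s-1)^7 + 86016*(s-1)^8) / (5040*(s^2*(s+1)^2*(2*s+1)^9)) := by
    unfold EE
    field_simp
    ring
  rw [key]
  apply div_pos
  · nlinarith [pow_nonneg hy 2, pow_nonneg hy 3, pow_nonneg hy 4, pow_nonneg hy 5, pow_nonneg hy 6, pow_nonneg hy 7, pow_nonneg hy 8, pow_nonneg hy 9]
  · positivity

lemma ineq_II {s : ℝ} (hs : 1 ≤ s) :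
    DD s - DD (s+1) ≤ 4/3*(1/(2*s+1))^3 + 8/5*(1/(2*s+1))^5 + 12/7*(1/(2*s+1))^7 := by
  have h0 : (0:ℝ) < s := by linarith
  have h1 : (0:ℝ) < 2*s+1 := by linarith
  have h2 : (0:ℝ) < s+1 := by linarith
  have h3 : (0:ℝ) < s+2 := by linarith
  have h4 : (0:ℝ) < s+3 := by linarith
  have h5 : (0:ℝ) < s+4 := by linarith
  have h6 : (0:ℝ) < s+5 := by linarith
  have h7 : (0:ℝ) < s+6 := by linarith
  have h8 : (0:ℝ) < s+7 := by linarith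
  have hy : (0:ℝ) ≤ s - 1 := by linarith
  rw [← sub_nonneg]
  have key : 4/3*(1/(2*s+1))^3 + 8/5*(1/(2*s+1))^5 + 12/7*(1/(2*s+1))^7 - (DD s - DD (s+1))
      = (156194690715 + 619356672270*(s-1) + 1018363820040*(s-1)^2 + 892739628900*(s-1)^3 + 440663477310*(s-1)^4 + 116163845280*(s-1)^5 + 12777075360*(s-1)^6) / (264600*((2*s+1)^7*(s*(s+1)*(s+2)*(s+3)*(s+4)*(s+5)*(s+6)*(s+7)))) := by
    unfold DD
    field_simp
    ring
  rw [key]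
  apply div_nonneg
  · nlinarith [pow_nonneg hy 2, pow_nonneg hy 3, pow_nonneg hy 4, pow_nonneg hy 5, pow_nonneg hy 6, pow_nonneg hy 7]
  · positivity

lemma ineq_III {s : ℝ} (hs : 1 ≤ s) :
    s^2*(4/3*(1/(2*s+1))^3 + 8/5*(1/(2*s+1))^5 + 12/7*(1/(2*s+1))^7 + 9/4*(1/(2*s+1))^9)
      ≤ (2*s+1) * DD (s+1) := by
  have h0 : (0:ℝ) < s := by linarith
  have h1 : (0:ℝ) < 2*s+1 := by linarith
  have h2 : (0:ℝ) < s+1 := by linarith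
  have h3 : (0:ℝ) < s+2 := by linarith
  have h4 : (0:ℝ) < s+3 := by linarith
  have h5 : (0:ℝ) < s+4 := by linarith
  have h6 : (0:ℝ) < s+5 := by linarith
  have h7 : (0:ℝ) < s+6 := by linarith
  have h8 : (0:ℝ) < s+7 := by linarith
  have hy : (0:ℝ) ≤ s - 1 := by linarith
  rw [← sub_nonneg]
  have key : (2*s+1) * DD (s+1)
      - s^2*(4/3*(1/(2*s+1))^3 + 8/5*(1/(2*s+1))^5 + 12/7*(1/(2*s+1))^7 + 9/4*(1/(2*s+1))^9)
      = (5359019697 + 30456764883*(s-1) + 78336389763*(s-1)^2 + 121017609441*(s-1)^3 + 125958233304*(s-1)^4 + 94007294280*(s-1)^5 + 52120465236*(s-1)^6 + 21729038436*(s-1)^7 + 6712784130*(s-1)^8 + 1469648346*(s-1)^9 + 211904768*(s-1)^10 + 18478336*(s-1)^11 + 946176*(s-1)^12 + 21504*(s-1)^13) / (2520*(((s+1)*(s+2)*(s+3)*(s+4)*(s+5)*(s+6)*(s+7))*(2*s+1)^9)) := by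
    unfold DD
    field_simp
    ring
  rw [key]
  apply div_nonneg
  · nlinarith [pow_nonneg hy 2, pow_nonneg hy 3, pow_nonneg hy 4, pow_nonneg hy 5, pow_nonneg hy 6, pow_nonneg hy 7, pow_nonneg hy 8, pow_nonneg hy 9, pow_nonneg hy 10, pow_nonneg hy 11, pow_nonneg hy 12, pow_nonneg hy 13, pow_nonneg hy 14]
  · positivity

lemma DD_pos {s : ℝ} (hs : 0 < s) : 0 < DD s := by
  unfold DD
  positivity

lemma DD_le {s : ℝ} (hs : 1 ≤ s) : DD s ≤ 11/s := by
  have h0 : (0:ℝ) < s := by linarith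
  have h2 : (0:ℝ) < s+1 := by linarith
  have h3 : (0:ℝ) < s+2 := by linarith
  have h4 : (0:ℝ) < s+3 := by linarith
  have h5 : (0:ℝ) < s+4 := by linarith
  have h6 : (0:ℝ) < s+5 := by linarith
  have h7 : (0:ℝ) < s+6 := by linarith
  have hy : (0:ℝ) ≤ s - 1 := by linarith
  rw [← sub_nonneg]
  have key : 11/s - DD s
      = (138820952 + 221762090*(s-1) + 141190224*(s-1)^2 + 46097331*(s-1)^3 + 8171940*(s-1)^4 + 748230*(s-1)^5 + 27720*(s-1)^6) / (2520*(s*(s+1)*(s+2)*(s+3)*(s+4)*(s+5)*(s+6))) := by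
    unfold DD
    field_simp
    ring
  rw [key]
  apply div_nonneg
  · nlinarith [pow_nonneg hy 2, pow_nonneg hy 3, pow_nonneg hy 4, pow_nonneg hy 5, pow_nonneg hy 6, pow_nonneg hy 7]
  · positivity

lemma DD_ge {s : ℝ} (hs : 0 < s) : 1/(12*(s*(s+1))) ≤ DD s := by
  unfold DD
  have h2 : (0:ℝ) < s+1 := by linarith
  have h3 : (0:ℝ) < s+2 := by linarith
  have h4 : (0:ℝ) < s+3 := by linarith
  have h5 : (0:ℝ) < s+4 := by linarith
  have h6 : (0:ℝ) < s+5 := by linarith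
  have h7 : (0:ℝ) < s+6 := by linarith
  have hrest : (0:ℝ) < 1/(12*(s*(s+1)*(s+2))) + 19/(120*(s*(s+1)*(s+2)*(s+3)))
      + 9/(20*(s*(s+1)*(s+2)*(s+3)*(s+4))) + 863/(504*(s*(s+1)*(s+2)*(s+3)*(s+4)*(s+5)))
      + 1375/(168*(s*(s+1)*(s+2)*(s+3)*(s+4)*(s+5)*(s+6))) := by positivity
  linarith

lemma gam_rec {t : ℝ} (ht : 0 < t) :
    gam t = gam (t+1) + (1/t - (Real.log (t+1) - Real.log t)) := by
  unfold gam
  rw [digamma_add_one ht]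
  ring

lemma tendsto_inv_shift {t : ℝ} (c : ℝ) :
    Tendsto (fun N : ℕ => c/(t+N)) atTop (𝓝 0) := by
  have h1 : Tendsto (fun N : ℕ => t + (N:ℝ)) atTop atTop :=
    tendsto_atTop_add_const_left _ t tendsto_natCast_atTop_atTop
  simpa using Tendsto.div_atTop (tendsto_const_nhds (x := c)) h1

lemma SN_lb {t : ℝ} (ht : 1 ≤ t) (N : ℕ) :
    DD t - DD (t+N) ≤
      (digamma (t+N) - Real.log (t+N)) + (gam t - 1/(2*t)) + 1/(2*(t+N)) := by
  have ht0 : (0:ℝ) < t := by linarith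
  induction N with
  | zero => simp [gam]; linarith
  | succ K ih =>
    have hK : (0:ℝ) < t + K := by positivity
    have hK1 : (1:ℝ) ≤ t + K := by
      have : (0:ℝ) ≤ K := Nat.cast_nonneg K
      linarith
    have hhalf : (1:ℝ)/(t+K) = 1/(2*(t+K)) + 1/(2*(t+K)) := by
      field_simp; norm_num
    have hcast : t + ((K+1 : ℕ) : ℝ) = (t + K) + 1 := by push_cast; ring
    have hdig : digamma (t + ((K+1 : ℕ) : ℝ)) = digamma (t + K) + 1/(t+K) := by
      rw [hcast]; exact digamma_add_one hK
    have hDD : DD (t+K) - DD ((t+K)+1) ≤ 4/3*(1/(2*(t+K)+1))^3 + 8/5*(1/(2*(t+K)+1))^5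
        + 12/7*(1/(2*(t+K)+1))^7 := ineq_II hK1
    have hLd := dd_lb hK1
    have hd : DD (t+K) - DD ((t+K)+1) ≤ dd (t+K) := le_trans hDD hLd
    unfold dd at hd
    rw [hdig, hcast]
    push_cast at ih ⊢
    linarith
  
lemma SN_ub {t : ℝ} (ht : 1 ≤ t) (N : ℕ) :
    (digamma (t+N) - Real.log (t+N)) + (gam t - 1/(2*t)) + 1/(2*(t+N)) ≤
      EE t - EE (t+N) := by
  have ht0 : (0:ℝ) < t := by linarith
  induction N with
  | zero => simp [gam]; linarith
  | succ K ih =>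
    have hK : (0:ℝ) < t + K := by positivity
    have hK1 : (1:ℝ) ≤ t + K := by
      have : (0:ℝ) ≤ K := Nat.cast_nonneg K
      linarith
    have hhalf : (1:ℝ)/(t+K) = 1/(2*(t+K)) + 1/(2*(t+K)) := by
      field_simp; norm_num
    have hcast : t + ((K+1 : ℕ) : ℝ) = (t + K) + 1 := by push_cast; ring
    have hdig : digamma (t + ((K+1 : ℕ) : ℝ)) = digamma (t + K) + 1/(t+K) := by
      rw [hcast]; exact digamma_add_one hK
    have hd : dd (t+K) ≤ EE (t+K) - EE ((t+K)+1) := le_trans (dd_ub hK1) (ineq_I hK1).le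
    unfold dd at hd
    rw [hdig, hcast]
    push_cast at ih ⊢
    linarith

lemma tendsto_SN {t : ℝ} (ht : 0 < t) :
    Tendsto (fun N : ℕ => (digamma (t+N) - Real.log (t+N)) + (gam t - 1/(2*t)) + 1/(2*(t+N)))
      atTop (𝓝 (gam t - 1/(2*t))) := by
  have h1 := tendsto_digamma_sub_log ht
  have h2 : Tendsto (fun N : ℕ => 1/(2*(t+N))) atTop (𝓝 0) := by
    have h := tendsto_inv_shift (t := t) (1/2 : ℝ)
    apply h.congr
    intro N
    rw [div_div]
  have := (h1.add (tendsto_const_nhds (x := gam t - 1/(2*t)))).add h2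
  simpa using this

lemma tendsto_DD_shift {t : ℝ} (ht : 1 ≤ t) :
    Tendsto (fun N : ℕ => DD (t+N)) atTop (𝓝 0) := by
  refine squeeze_zero (f := fun N : ℕ => DD (t+N)) (g := fun N : ℕ => 11/(t+N))
    (fun N => (DD_pos (by positivity : (0:ℝ) < t + N)).le)
    (fun N => ?_) (tendsto_inv_shift 11)
  apply DD_le
  have : (0:ℝ) ≤ N := Nat.cast_nonneg N
  linarith

lemma tendsto_EE_shift {t : ℝ} (ht : 0 < t) :
    Tendsto (fun N : ℕ => EE (t+N)) atTop (𝓝 0) := by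
  have h2 : Tendsto (fun N : ℕ => 1/(12*(t+N)^2) ) atTop (𝓝 0) := by
    have hA : Tendsto (fun N : ℕ => t+(N:ℝ)) atTop atTop :=
      tendsto_atTop_add_const_left _ t tendsto_natCast_atTop_atTop
    have hb : Tendsto (fun N : ℕ => 12*(t+(N:ℝ))^2) atTop atTop := by
      apply Tendsto.const_mul_atTop (by norm_num : (0:ℝ) < 12)
      exact (hA.atTop_mul_atTop₀ hA).congr (fun N => by ring)
    simpa using Tendsto.div_atTop (tendsto_const_nhds (x := (1:ℝ))) hb
  exact h2.congr (fun N => by unfold EE; ring_nf)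

lemma gam_ge {t : ℝ} (ht : 1 ≤ t) : 1/(2*t) + DD t ≤ gam t := by
  have ht0 : (0:ℝ) < t := by linarith
  have hlim1 : Tendsto (fun N : ℕ => DD t - DD (t+N)) atTop (𝓝 (DD t)) := by
    simpa using (tendsto_const_nhds (x := DD t)).sub (tendsto_DD_shift ht)
  have := le_of_tendsto_of_tendsto' hlim1 (tendsto_SN ht0) (SN_lb ht)
  linarith

lemma gam_le {t : ℝ} (ht : 1 ≤ t) : gam t ≤ 1/(2*t) + EE t := by
  have ht0 : (0:ℝ) < t := by linarith
  have hlim1 : Tendsto (fun N : ℕ => EE t - EE (t+N)) atTop (𝓝 (EE t)) := by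
    simpa using (tendsto_const_nhds (x := EE t)).sub (tendsto_EE_shift ht0)
  have := le_of_tendsto_of_tendsto' (tendsto_SN ht0) hlim1 (SN_ub ht)
  linarith

lemma gam_lt {t : ℝ} (ht : 1 ≤ t) : gam t < 1/(2*t) + EE t := by
  have ht0 : (0:ℝ) < t := by linarith
  have h1 : gam (t+1) ≤ 1/(2*(t+1)) + EE (t+1) := gam_le (by linarith)
  have h2 : dd t < EE t - EE (t+1) := lt_of_le_of_lt (dd_ub ht) (ineq_I ht)
  have h3 := gam_rec ht0
  unfold dd at h2
  have hhalf : (1:ℝ)/t = 1/(2*t) + 1/(2*t) := by field_simp; norm_num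
  linarith

lemma f_step {t : ℝ} (ht : 1 ≤ t) :
    t^2*gam t - t/2 ≤ (t+1)^2*gam (t+1) - (t+1)/2 := by
  have ht0 : (0:ℝ) < t := by linarith
  have hQ : 1/(2*(t+1)) + DD (t+1) ≤ gam (t+1) := gam_ge (by linarith)
  have hdd := dd_ub ht
  have hIII := ineq_III ht
  have hrec := gam_rec ht0
  have e : (t+1)^2*gam (t+1) - (t+1)/2 - (t^2*gam t - t/2)
      = (2*t+1)*(gam (t+1) - 1/(2*(t+1))) - t^2 * dd t := by
    rw [hrec]
    unfold dd
    field_simp; norm_num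
    ring
  have h4 : (2*t+1) * DD (t+1) ≤ (2*t+1)*(gam (t+1) - 1/(2*(t+1))) := by
    apply mul_le_mul_of_nonneg_left (by linarith) (by linarith)
  have h5 : t^2 * dd t ≤ t^2*(4/3*(1/(2*t+1))^3 + 8/5*(1/(2*t+1))^5 + 12/7*(1/(2*t+1))^7
      + 9/4*(1/(2*t+1))^9) := by
    apply mul_le_mul_of_nonneg_left hdd (by positivity)
  linarith

theorem main_thm2_part1 (a : ℝ) (ha : 0 < a) :
    let γa : ℝ := Real.log a - digamma a
    let x : ℕ → ℝ := fun n => digamma (n + a) - digamma a - Real.log ((n + a) / a)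
    let α₃ : ℝ := (1 + a) ^ 2 * (Real.log (1 + a) - digamma (1 + a)) - (1 + a) / 2
    (∀ n : ℕ, 1 ≤ n →
      1 / (2 * (n + a)) + α₃ / (n + a) ^ 2 ≤ γa - x n ∧
      γa - x n < 1 / (2 * (n + a)) + 1 / (12 * (n + a) ^ 2)) ∧
    γa - x 1 = 1 / (2 * (1 + a)) + α₃ / (1 + a) ^ 2 ∧
    (∀ β : ℝ, β < 1/12 → ∃ n : ℕ, 1 ≤ n ∧
      1 / (2 * (n + a)) + β / (n + a) ^ 2 ≤ γa - x n) := by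
  intro γa x α₃
  have key : ∀ n : ℕ, γa - x n = gam ((n:ℝ) + a) := by
    intro n
    show Real.log a - digamma a - (digamma (n + a) - digamma a - Real.log ((n + a) / a)) = _
    rw [Real.log_div (by positivity : (0:ℝ) < (n:ℝ) + a).ne' ha.ne']
    unfold gam
    ring
  have hα : α₃ = (1+a)^2 * gam (1+a) - (1+a)/2 := rfl
  have mono : ∀ n : ℕ, 1 ≤ n →
      (1+a)^2 * gam (1+a) - (1+a)/2 ≤ ((n:ℝ)+a)^2 * gam ((n:ℝ)+a) - ((n:ℝ)+a)/2 := by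
    intro n hn
    induction n with
    | zero => omega
    | succ k ih =>
      rcases Nat.eq_zero_or_pos k with hk | hk
      · subst hk
        push_cast
        rw [add_comm (1:ℝ) a, add_comm a 1]
      · have hk1 : (1:ℝ) ≤ (k:ℝ) + a := by
          have : (1:ℝ) ≤ (k:ℝ) := by exact_mod_cast hk
          linarith
        have hstep := f_step hk1
        have hcast : ((k+1 : ℕ) : ℝ) + a = ((k:ℝ) + a) + 1 := by push_cast; ring
        rw [hcast]
        exact le_trans (ih hk) hstep
  refine ⟨?_, ?_, ?_⟩
  · intro n hn
    have hn1 : (1:ℝ) ≤ (n:ℝ) := by exact_mod_cast hn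
    set t := (n:ℝ) + a with hT
    have ht0 : (0:ℝ) < t := by simp only [hT]; linarith
    have ht1 : (1:ℝ) ≤ t := by simp only [hT]; linarith
    rw [key n]
    constructor
    · have hm := mono n hn
      rw [← hT, ← hα] at hm
      have e : (t^2 * gam t - t/2)/t^2 = gam t - 1/(2*t) := by
        field_simp
      have h2 : α₃/t^2 ≤ (t^2 * gam t - t/2)/t^2 :=
        (div_le_div_iff_of_pos_right (pow_pos ht0 2)).mpr hm
      rw [e] at h2
      linarith
    · have := gam_lt ht1
      unfold EE at this
      linarith
  · rw [key 1]
    push_cast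
    have h1a : (0:ℝ) < 1 + a := by linarith
    rw [hα]
    field_simp
    ring
  · intro β hβ
    obtain ⟨n₀, hn₀⟩ := exists_nat_ge (12*β/(1-12*β))
    refine ⟨n₀ + 1, Nat.le_add_left 1 n₀, ?_⟩
    set t := ((n₀ + 1 : ℕ):ℝ) + a with hT
    have htn : t = (n₀:ℝ) + 1 + a := by simp only [hT]; push_cast; ring
    have ht0 : (0:ℝ) < t := by rw [htn]; positivity
    have ht1 : (1:ℝ) ≤ t := by rw [htn]; have : (0:ℝ) ≤ n₀ := Nat.cast_nonneg _; linarith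
    rw [key (n₀+1), ← hT]
    have h12 : (0:ℝ) < 1 - 12*β := by linarith
    have hbt : 12*β ≤ t*(1-12*β) := by
      have h' : 12*β/(1-12*β) ≤ t := by rw [htn]; linarith
      calc 12*β = (12*β/(1-12*β))*(1-12*β) := by field_simp
      _ ≤ t*(1-12*β) := by apply mul_le_mul_of_nonneg_right h' h12.le
    have hstep1 : β*(12*(t+1)) ≤ t := by nlinarith
    have hQ : DD t ≤ gam t - 1/(2*t) := by have := gam_ge ht1; linarith
    have hchain : β ≤ t^2 * (gam t - 1/(2*t)) := by
      have c1 : β ≤ t/(12*(t+1)) := by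
        rw [le_div_iff₀ (by positivity : (0:ℝ) < 12*(t+1))]
        linarith
      have c2 : t/(12*(t+1)) = t^2 * (1/(12*(t*(t+1)))) := by
        field_simp
      have c3 : t^2 * (1/(12*(t*(t+1)))) ≤ t^2 * DD t :=
        mul_le_mul_of_nonneg_left (DD_ge ht0) (by positivity)
      have c4 : t^2 * DD t ≤ t^2 * (gam t - 1/(2*t)) :=
        mul_le_mul_of_nonneg_left hQ (by positivity)
      linarith [c1, c2.le, c3, c4]
    have : β/t^2 ≤ gam t - 1/(2*t) := by
      rw [div_le_iff₀ (pow_pos ht0 2)]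
      nlinarith
    linarith
end

section
/- For every integer n ≥ 1, 1/(2n) - 1/(12n²) < γ_n - γ ≤ 1/(2n) - (γ - 1/2)/n², where γ_n = 1 + 1/2 + ... + 1/n - ln(n) and γ is the Euler-Mascheroni constant; the constants 1/12 and γ - 1/2 are best possible. -/
open Real Filter Topology Set

namespace QV

/-- Degree-8 lower bound for `log (1+x)`. -/
lemma log_lb {x : ℝ} (hx : 0 ≤ x) :
    x - x^2/2 + x^3/3 - x^4/4 + x^5/5 - x^6/6 + x^7/7 - x^8/8 ≤ Real.log (1+x) := by
  set f : ℝ → ℝ := fun t => Real.log (1+t) -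
    (t - t^2/2 + t^3/3 - t^4/4 + t^5/5 - t^6/6 + t^7/7 - t^8/8) with hf
  have hd : ∀ t : ℝ, 0 ≤ t → HasDerivAt f (t^8/(1+t)) t := by
    intro t ht
    have h1 : HasDerivAt (fun s : ℝ => 1 + s) 1 t := by
      simpa using (hasDerivAt_id t).const_add (1:ℝ)
    have hlog : HasDerivAt (fun s : ℝ => Real.log (1+s)) (1/(1+t)) t := by
      simpa using h1.log (by linarith)
    have hp : HasDerivAt (fun s : ℝ =>
        s - s^2/2 + s^3/3 - s^4/4 + s^5/5 - s^6/6 + s^7/7 - s^8/8)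
        (1 - (2*t^1)/2 + (3*t^2)/3 - (4*t^3)/4 + (5*t^4)/5 - (6*t^5)/6 + (7*t^6)/7 - (8*t^7)/8) t := by
      exact ((((((((hasDerivAt_id t).sub ((hasDerivAt_pow 2 t).div_const 2)).add
        ((hasDerivAt_pow 3 t).div_const 3)).sub ((hasDerivAt_pow 4 t).div_const 4)).add
        ((hasDerivAt_pow 5 t).div_const 5)).sub ((hasDerivAt_pow 6 t).div_const 6)).add
        ((hasDerivAt_pow 7 t).div_const 7)).sub ((hasDerivAt_pow 8 t).div_const 8))
    have e : 1/(1+t) - (1 - (2*t^1)/2 + (3*t^2)/3 - (4*t^3)/4 + (5*t^4)/5 - (6*t^5)/6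
        + (7*t^6)/7 - (8*t^7)/8) = t^8/(1+t) := by
      have h1t : (1:ℝ) + t ≠ 0 := by linarith
      field_simp
      ring
    exact e ▸ (hlog.sub hp)
  have hmono : MonotoneOn f (Ici (0:ℝ)) := by
    apply monotoneOn_of_deriv_nonneg (convex_Ici 0)
    · intro t ht
      exact (hd t ht).continuousAt.continuousWithinAt
    · intro t ht
      rw [interior_Ici] at ht
      exact (hd t (le_of_lt ht)).differentiableAt.differentiableWithinAt
    · intro t ht
      rw [interior_Ici] at ht
      rw [(hd t ht.le).deriv]
      have h1t : (0:ℝ) < 1 + t := by linarith [(mem_Ioi.mp ht).le]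
      positivity
  have h0 : f 0 = 0 := by simp [hf]
  have := hmono (mem_Ici.mpr le_rfl) (mem_Ici.mpr hx) hx
  rw [h0] at this
  simp only [hf] at this
  linarith

/-- Degree-11 upper bound for `log (1+x)`. -/
lemma log_ub {x : ℝ} (hx : 0 ≤ x) :
    Real.log (1+x) ≤ x - x^2/2 + x^3/3 - x^4/4 + x^5/5 - x^6/6 + x^7/7 - x^8/8
      + x^9/9 - x^10/10 + x^11/11 := by
  set f : ℝ → ℝ := fun t => (t - t^2/2 + t^3/3 - t^4/4 + t^5/5 - t^6/6 + t^7/7 - t^8/8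
      + t^9/9 - t^10/10 + t^11/11) - Real.log (1+t) with hf
  have hd : ∀ t : ℝ, 0 ≤ t → HasDerivAt f (t^11/(1+t)) t := by
    intro t ht
    have h1 : HasDerivAt (fun s : ℝ => 1 + s) 1 t := by
      simpa using (hasDerivAt_id t).const_add (1:ℝ)
    have hlog : HasDerivAt (fun s : ℝ => Real.log (1+s)) (1/(1+t)) t := by
      simpa using h1.log (by linarith)
    have hp : HasDerivAt (fun s : ℝ =>
        s - s^2/2 + s^3/3 - s^4/4 + s^5/5 - s^6/6 + s^7/7 - s^8/8 + s^9/9 - s^10/10 + s^11/11)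
        (1 - (2*t^1)/2 + (3*t^2)/3 - (4*t^3)/4 + (5*t^4)/5 - (6*t^5)/6 + (7*t^6)/7 - (8*t^7)/8
          + (9*t^8)/9 - (10*t^9)/10 + (11*t^10)/11) t := by
      exact (((((((((((hasDerivAt_id t).sub ((hasDerivAt_pow 2 t).div_const 2)).add
        ((hasDerivAt_pow 3 t).div_const 3)).sub ((hasDerivAt_pow 4 t).div_const 4)).add
        ((hasDerivAt_pow 5 t).div_const 5)).sub ((hasDerivAt_pow 6 t).div_const 6)).add
        ((hasDerivAt_pow 7 t).div_const 7)).sub ((hasDerivAt_pow 8 t).div_const 8)).add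
        ((hasDerivAt_pow 9 t).div_const 9)).sub ((hasDerivAt_pow 10 t).div_const 10)).add
        ((hasDerivAt_pow 11 t).div_const 11))
    have e : (1 - (2*t^1)/2 + (3*t^2)/3 - (4*t^3)/4 + (5*t^4)/5 - (6*t^5)/6 + (7*t^6)/7
        - (8*t^7)/8 + (9*t^8)/9 - (10*t^9)/10 + (11*t^10)/11) - 1/(1+t) = t^11/(1+t) := by
      have h1t : (1:ℝ) + t ≠ 0 := by linarith
      field_simp
      ring
    exact e ▸ (hp.sub hlog)
  have hmono : MonotoneOn f (Ici (0:ℝ)) := by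
    apply monotoneOn_of_deriv_nonneg (convex_Ici 0)
    · intro t ht
      exact (hd t ht).continuousAt.continuousWithinAt
    · intro t ht
      rw [interior_Ici] at ht
      exact (hd t (le_of_lt ht)).differentiableAt.differentiableWithinAt
    · intro t ht
      rw [interior_Ici] at ht
      rw [(hd t ht.le).deriv]
      have h1t : (0:ℝ) < 1 + t := by linarith [(mem_Ioi.mp ht).le]
      exact div_nonneg (pow_nonneg ht.le 11) h1t.le
  have h0 : f 0 = 0 := by simp [hf]
  have := hmono (mem_Ici.mpr le_rfl) (mem_Ici.mpr hx) hx
  rw [h0] at this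
  simp only [hf] at this
  linarith

/-- Termwise lower inequality, in terms of `x = 1/n ∈ (0, 1/2]`. -/
lemma termL {x : ℝ} (h0 : 0 < x) (h2 : x ≤ 1/2) :
    (x/2 - x^2/12) - (x/(2*(1+x)) - x^2/(12*(1+x)^2)) < Real.log (1+x) - x/(1+x) := by
  have hlb := log_lb h0.le
  have h1x : (0:ℝ) < 1 + x := by linarith
  have hb : 0 < 1/30 - x/60 + x^2/105 - x^3/168 - 3/28*x^4 - x^5/8 := by
    have e3 : x^3 ≤ (1/2)^3 := pow_le_pow_left₀ h0.le h2 3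
    have e4 : x^4 ≤ (1/2)^4 := pow_le_pow_left₀ h0.le h2 4
    have e5 : x^5 ≤ (1/2)^5 := pow_le_pow_left₀ h0.le h2 5
    nlinarith [sq_nonneg x]
  have hN : 0 < x^5 * (1/30 - x/60 + x^2/105 - x^3/168 - 3/28*x^4 - x^5/8) :=
    mul_pos (pow_pos h0 5) hb
  have expand : (x - x^2/2 + x^3/3 - x^4/4 + x^5/5 - x^6/6 + x^7/7 - x^8/8)
      - ((x/2 - x^2/12) - (x/(2*(1+x)) - x^2/(12*(1+x)^2)) + x/(1+x))
      = x^5 * (1/30 - x/60 + x^2/105 - x^3/168 - 3/28*x^4 - x^5/8) / (1+x)^2 := by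
    field_simp
    ring
  have hdiv : 0 < x^5 * (1/30 - x/60 + x^2/105 - x^3/168 - 3/28*x^4 - x^5/8) / (1+x)^2 :=
    div_pos hN (by positivity)
  linarith

/-- Termwise upper inequality, in terms of `x = 1/n ∈ (0, 1/2]`. -/
lemma termU {x : ℝ} (h0 : 0 < x) (h2 : x ≤ 1/2) :
    Real.log (1+x) - x/(1+x) ≤
      (x/2 - x^2/12 + x^4/120) - (x/(2*(1+x)) - x^2/(12*(1+x)^2) + x^4/(120*(1+x)^4)) := by
  have hub := log_ub h0.le
  have h1x : (0:ℝ) < 1 + x := by linarith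
  have hb : 0 ≤ 1/42 + x/84 - 1/630*x^2 + x^3/1260 - 1/2310*x^4 - 329/3960*x^5
      - 127/495*x^6 - 29/110*x^7 - 1/11*x^8 := by
    have e2 : x^2 ≤ (1/2)^2 := pow_le_pow_left₀ h0.le h2 2
    have e4 : x^4 ≤ (1/2)^4 := pow_le_pow_left₀ h0.le h2 4
    have e5 : x^5 ≤ (1/2)^5 := pow_le_pow_left₀ h0.le h2 5
    have e6 : x^6 ≤ (1/2)^6 := pow_le_pow_left₀ h0.le h2 6
    have e7 : x^7 ≤ (1/2)^7 := pow_le_pow_left₀ h0.le h2 7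
    have e8 : x^8 ≤ (1/2)^8 := pow_le_pow_left₀ h0.le h2 8
    have hx3 : 0 ≤ x^3 := by positivity
    nlinarith
  have hN : 0 ≤ x^7 * (1/42 + x/84 - 1/630*x^2 + x^3/1260 - 1/2310*x^4 - 329/3960*x^5
      - 127/495*x^6 - 29/110*x^7 - 1/11*x^8) := mul_nonneg (by positivity) hb
  have expand : ((x/2 - x^2/12 + x^4/120) - (x/(2*(1+x)) - x^2/(12*(1+x)^2)
        + x^4/(120*(1+x)^4)) + x/(1+x))
      - (x - x^2/2 + x^3/3 - x^4/4 + x^5/5 - x^6/6 + x^7/7 - x^8/8 + x^9/9 - x^10/10 + x^11/11)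
      = x^7 * (1/42 + x/84 - 1/630*x^2 + x^3/1260 - 1/2310*x^4 - 329/3960*x^5
        - 127/495*x^6 - 29/110*x^7 - 1/11*x^8) / (1+x)^4 := by
    field_simp
    ring
  have hdiv : 0 ≤ x^7 * (1/42 + x/84 - 1/630*x^2 + x^3/1260 - 1/2310*x^4 - 329/3960*x^5
      - 127/495*x^6 - 29/110*x^7 - 1/11*x^8) / (1+x)^4 := div_nonneg hN (by positivity)
  linarith

noncomputable def G (n : ℕ) : ℝ := (∑ k ∈ Finset.range n, 1 / (k + 1 : ℝ)) - Real.log n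

noncomputable def fl (n : ℕ) : ℝ := 1/(2*(n:ℝ)) - 1/(12*(n:ℝ)^2)

noncomputable def fu (n : ℕ) : ℝ := 1/(2*(n:ℝ)) - 1/(12*(n:ℝ)^2) + 1/(120*(n:ℝ)^4)

lemma tendsto_G : Tendsto G atTop (𝓝 Real.eulerMascheroniConstant) := by
  apply Real.tendsto_harmonic_sub_log.congr
  intro n
  rw [G, harmonic]
  push_cast
  simp [one_div]

lemma tendsto_fl : Tendsto fl atTop (𝓝 0) := by
  apply squeeze_zero' (g := fun n : ℕ => 1/(n:ℝ))
  · filter_upwards [eventually_ge_atTop 1] with n hn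
    have h1 : (1:ℝ) ≤ n := by exact_mod_cast hn
    have hA : 1/(12*(n:ℝ)^2) ≤ 1/(2*(n:ℝ)) := by
      apply one_div_le_one_div_of_le (by linarith)
      nlinarith
    simp only [fl]
    linarith
  · filter_upwards [eventually_ge_atTop 1] with n hn
    have h1 : (1:ℝ) ≤ n := by exact_mod_cast hn
    have h2 : 0 < 1/(12*(n:ℝ)^2) := by positivity
    have hB : 1/(2*(n:ℝ)) ≤ 1/(n:ℝ) := by
      apply one_div_le_one_div_of_le (by linarith)
      linarith
    simp only [fl]
    linarith
  · exact tendsto_one_div_atTop_nhds_zero_nat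

lemma tendsto_fu : Tendsto fu atTop (𝓝 0) := by
  apply squeeze_zero' (g := fun n : ℕ => 1/(n:ℝ))
  · filter_upwards [eventually_ge_atTop 1] with n hn
    have h1 : (1:ℝ) ≤ n := by exact_mod_cast hn
    have h2 : 0 < 1/(120*(n:ℝ)^4) := by positivity
    have hA : 1/(12*(n:ℝ)^2) ≤ 1/(2*(n:ℝ)) := by
      apply one_div_le_one_div_of_le (by linarith)
      nlinarith
    simp only [fu]
    linarith
  · filter_upwards [eventually_ge_atTop 1] with n hn
    have h1 : (1:ℝ) ≤ n := by exact_mod_cast hn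
    have hA : 1/(120*(n:ℝ)^4) ≤ 1/(12*(n:ℝ)^2) := by
      apply one_div_le_one_div_of_le (by positivity)
      nlinarith [sq_nonneg ((n:ℝ)^2 - 1), sq_nonneg ((n:ℝ)^2 + 1), sq_nonneg (n:ℝ)]
    have h2 : 0 < 1/(12*(n:ℝ)^2) := by positivity
    have hB : 1/(2*(n:ℝ)) ≤ 1/(n:ℝ) := by
      apply one_div_le_one_div_of_le (by linarith)
      linarith
    simp only [fu]
    linarith
  · exact tendsto_one_div_atTop_nhds_zero_nat

lemma G_sub (n : ℕ) (hn : 1 ≤ n) :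
    G n - G (n+1) = (Real.log ((n:ℝ)+1) - Real.log n) - 1/((n:ℝ)+1) := by
  rw [G, G, Finset.sum_range_succ]
  push_cast
  ring

lemma termL_n {n : ℕ} (hn : 2 ≤ n) : fl n - fl (n+1) < G n - G (n+1) := by
  have hn0 : (0:ℝ) < n := by
    have : (2:ℝ) ≤ n := by exact_mod_cast hn
    linarith
  have hn0' : (n:ℝ) ≠ 0 := ne_of_gt hn0
  have hn2 : (2:ℝ) ≤ n := by exact_mod_cast hn
  set x : ℝ := 1/(n:ℝ) with hx
  have h0 : 0 < x := by positivity
  have h2 : x ≤ 1/2 := by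
    rw [hx]
    apply one_div_le_one_div_of_le <;> linarith
  have e1 : (1:ℝ) + x = ((n:ℝ)+1)/n := by
    rw [hx]; field_simp
  have h1x : (0:ℝ) < 1 + x := by linarith
  have e2 : Real.log ((n:ℝ)+1) - Real.log n = Real.log (1+x) := by
    rw [e1, Real.log_div (by linarith) hn0']
  have e3 : 1/((n:ℝ)+1) = x/(1+x) := by
    rw [e1, hx]; field_simp
  have e4 : fl n = x/2 - x^2/12 := by
    rw [fl, hx]; field_simp
  have e5 : fl (n+1) = x/(2*(1+x)) - x^2/(12*(1+x)^2) := by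
    rw [fl, e1, hx]
    push_cast
    field_simp
  rw [G_sub n (by omega), e2, e3, e4, e5]
  exact termL h0 h2

lemma termU_n {n : ℕ} (hn : 2 ≤ n) : G n - G (n+1) ≤ fu n - fu (n+1) := by
  have hn0 : (0:ℝ) < n := by
    have : (2:ℝ) ≤ n := by exact_mod_cast hn
    linarith
  have hn0' : (n:ℝ) ≠ 0 := ne_of_gt hn0
  have hn2 : (2:ℝ) ≤ n := by exact_mod_cast hn
  set x : ℝ := 1/(n:ℝ) with hx
  have h0 : 0 < x := by positivity
  have h2 : x ≤ 1/2 := by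
    rw [hx]
    apply one_div_le_one_div_of_le <;> linarith
  have e1 : (1:ℝ) + x = ((n:ℝ)+1)/n := by
    rw [hx]; field_simp
  have h1x : (0:ℝ) < 1 + x := by linarith
  have e2 : Real.log ((n:ℝ)+1) - Real.log n = Real.log (1+x) := by
    rw [e1, Real.log_div (by linarith) hn0']
  have e3 : 1/((n:ℝ)+1) = x/(1+x) := by
    rw [e1, hx]; field_simp
  have e4 : fu n = x/2 - x^2/12 + x^4/120 := by
    rw [fu, hx]; field_simp
  have e5 : fu (n+1) = x/(2*(1+x)) - x^2/(12*(1+x)^2) + x^4/(120*(1+x)^4) := by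
    rw [fu, e1, hx]
    push_cast
    field_simp
  rw [G_sub n (by omega), e2, e3, e4, e5]
  exact termU h0 h2

lemma chainL {n : ℕ} (hn : 2 ≤ n) : ∀ m : ℕ, n ≤ m → G m - fl m ≤ G n - fl n := by
  intro m hm
  induction m, hm using Nat.le_induction with
  | base => exact le_refl _
  | succ p hp ih =>
    have := termL_n (show 2 ≤ p by omega)
    linarith

lemma chainU {n : ℕ} (hn : 2 ≤ n) : ∀ m : ℕ, n ≤ m → G n - fu n ≤ G m - fu m := by
  intro m hm
  induction m, hm using Nat.le_induction with
  | base => exact le_refl _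
  | succ p hp ih =>
    have := termU_n (show 2 ≤ p by omega)
    linarith

lemma lowerBound {n : ℕ} (hn : 2 ≤ n) : Real.eulerMascheroniConstant < G n - fl n := by
  have h1 : Real.eulerMascheroniConstant ≤ G (n+1) - fl (n+1) := by
    have hT := tendsto_G.sub tendsto_fl
    rw [sub_zero] at hT
    apply le_of_tendsto hT
    filter_upwards [eventually_ge_atTop (n+1)] with m hm
    exact chainL (by omega) m hm
  have h2 := termL_n hn
  linarith

lemma upperBound {n : ℕ} (hn : 2 ≤ n) : G n - fu n ≤ Real.eulerMascheroniConstant := by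
  have hT := tendsto_G.sub tendsto_fu
  rw [sub_zero] at hT
  apply ge_of_tendsto hT
  filter_upwards [eventually_ge_atTop n] with m hm
  exact chainU hn m hm

lemma gamma_ub : Real.eulerMascheroniConstant < 0.5777 := by
  have h := lowerBound (le_refl 2)
  have hG2 : G 2 = 3/2 - Real.log 2 := by
    rw [G]
    rw [Finset.sum_range_succ, Finset.sum_range_one]
    norm_num
  have hfl2 : fl 2 = 11/48 := by
    rw [fl]; norm_num
  rw [hG2, hfl2] at h
  have := Real.log_two_gt_d9
  linarith

end QV

theorem qiu_vuorinen :
    let g : ℕ → ℝ := fun n => (∑ k ∈ Finset.range n, 1 / (k + 1 : ℝ)) - Real.log n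
    let γ : ℝ := Real.eulerMascheroniConstant
    (∀ n : ℕ, 1 ≤ n →
      1 / (2 * n) - 1 / (12 * n ^ 2) < g n - γ ∧
      g n - γ ≤ 1 / (2 * n) - (γ - 1/2) / n ^ 2) ∧
    g 1 - γ = 1 / 2 - (γ - 1/2) ∧
    (∀ α : ℝ, α < 1/12 → ∃ n : ℕ, 1 ≤ n ∧ g n - γ ≤ 1 / (2 * n) - α / n ^ 2) := by
  intro g γ
  have hgG : ∀ n : ℕ, g n = QV.G n := fun n => rfl
  have hg1 : g 1 = 1 := by
    rw [hgG, QV.G]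
    norm_num
  have hγub : γ < 0.5777 := QV.gamma_ub
  refine ⟨?_, ?_, ?_⟩
  · intro n hn
    rcases eq_or_lt_of_le hn with h1 | h2
    · -- n = 1
      have hn1 : n = 1 := h1.symm
      subst hn1
      constructor
      · rw [hg1]
        norm_num
        linarith
      · rw [hg1]
        norm_num
        linarith
    · -- n ≥ 2
      have hn2 : 2 ≤ n := h2
      have hnR : (2:ℝ) ≤ n := by exact_mod_cast hn2
      have hn0 : (0:ℝ) < n := by linarith
      constructor
      · have h := QV.lowerBound hn2
        rw [QV.fl] at h
        rw [hgG]
        linarith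
      · have h := QV.upperBound hn2
        rw [QV.fu] at h
        rw [hgG]
        have h480 : 1/(120*(n:ℝ)^2) ≤ 1/480 := by
          apply one_div_le_one_div_of_le
          · norm_num
          · nlinarith
        have key : γ - 1/2 ≤ 1/12 - 1/(120*(n:ℝ)^2) := by linarith
        have step : (γ - 1/2)/(n:ℝ)^2 ≤ (1/12 - 1/(120*(n:ℝ)^2))/(n:ℝ)^2 := by
          gcongr
        have eq1 : (1/12 - 1/(120*(n:ℝ)^2))/(n:ℝ)^2 = 1/(12*(n:ℝ)^2) - 1/(120*(n:ℝ)^4) := by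
          field_simp
        rw [eq1] at step
        linarith
  · rw [hg1]; ring
  · intro α hα
    obtain ⟨k, hk⟩ := exists_nat_one_div_lt (show (0:ℝ) < 120*(1/12 - α) by linarith)
    refine ⟨k + 2, by omega, ?_⟩
    set n : ℕ := k + 2 with hn
    have hn2 : 2 ≤ n := by omega
    have hnR : (2:ℝ) ≤ n := by exact_mod_cast hn2
    have hn0 : (0:ℝ) < n := by linarith
    have h := QV.upperBound hn2
    rw [QV.fu] at h
    rw [hgG]
    have hksq : ((k:ℝ)+1) ≤ (n:ℝ)^2 := by
      have : ((n:ℕ):ℝ) = (k:ℝ) + 2 := by push_cast [hn]; ring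
      nlinarith [Nat.cast_nonneg (α := ℝ) k]
    have h1 : 1/(120*(n:ℝ)^2) ≤ 1/(120*((k:ℝ)+1)) := by
      apply one_div_le_one_div_of_le
      · positivity
      · nlinarith
    have h2 : 1/(120*((k:ℝ)+1)) < 1/12 - α := by
      have : 1/((k:ℝ)+1) < 120*(1/12-α) := hk
      have e : 1/(120*((k:ℝ)+1)) = (1/((k:ℝ)+1))/120 := by
        field_simp
      rw [e]
      linarith
    have key : α ≤ 1/12 - 1/(120*(n:ℝ)^2) := by linarith
    have step : α/(n:ℝ)^2 ≤ (1/12 - 1/(120*(n:ℝ)^2))/(n:ℝ)^2 := by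
      gcongr
    have eq1 : (1/12 - 1/(120*(n:ℝ)^2))/(n:ℝ)^2 = 1/(12*(n:ℝ)^2) - 1/(120*(n:ℝ)^4) := by
      field_simp
    rw [eq1] at step
    linarith
end
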